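/- Suppose the boundary parameters satisfy, componentwise, β > 0, λ < 0, β + T·b + λ > 0, γ < 0, μ > 0, and γ + T·c + μ < 0, with T > 0. Then U ≡ 0 is a feasible solution of M-CLP with objective value 0, it is optimal, i.e. every feasible solution U of M-CLP satisfies z(U) ≤ 0, and it is the unique optimal solution: any feasible U with z(U) = 0 satisfies U(t) = 0 for all t ∈ [0,T]. -/

import Mathlib

open MeasureTheory Filter

/-- A feasible solution of M-CLP. -/
def PrimalFeasible {K J : ℕ} (A : Matrix (Fin K) (Fin J) ℝ) (b β lam : Fin K → ℝ) (T : ℝ)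
    (U : ℝ → Fin J → ℝ) : Prop :=
  (∀ j, MonotoneOn (fun t => U t j) (Set.Icc 0 T)) ∧
  (∀ j, ∀ t ∈ Set.Ico (0:ℝ) T,
    Tendsto (fun s => U s j) (nhdsWithin t (Set.Ioi t)) (nhds (U t j))) ∧
  (∀ j, 0 ≤ U 0 j) ∧
  (∀ t ∈ Set.Ico (0:ℝ) T, ∀ k, A.mulVec (U t) k ≤ β k + t * b k) ∧
  (∀ k, A.mulVec (U T) k ≤ β k + T * b k + lam k)

/-- `ν i` is the Lebesgue–Stieltjes measure on `[0,T]` of the (right-continuous,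
nondecreasing) function `F · i`, with the convention `F (0-) i = 0`:
it is carried by `[0,T]` and satisfies `ν i [0,x] = F x i` for all `x ∈ [0,T]`. -/
def LSFamily {I : Type*} (T : ℝ) (F : ℝ → I → ℝ) (ν : I → Measure ℝ) : Prop :=
  ∀ i, ν i (Set.Icc 0 T)ᶜ = 0 ∧
    ∀ x ∈ Set.Icc (0:ℝ) T, ν i (Set.Icc 0 x) = ENNReal.ofReal (F x i)

/-- The M-CLP objective `z(U) = μᵀU(0) + Σ_j ∫_{[0,T]} (γ_j + (T-t)c_j) dU_j(t)`,
the measures `dU_j` being given by `ν`. -/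
noncomputable def zPrimal {J : ℕ} (c γ μ : Fin J → ℝ) (T : ℝ) (U : ℝ → Fin J → ℝ)
    (ν : Fin J → Measure ℝ) : ℝ :=
  (∑ j, μ j * U 0 j) + ∑ j, ∫ t in Set.Icc (0:ℝ) T, (γ j + (T - t) * c j) ∂(ν j)

/-- Under the sign conditions on the boundary parameters, `U ≡ 0` is a feasible
solution of M-CLP with objective value `0`, it is optimal, and it is the unique
optimal solution. -/
theorem zero_is_unique_optimal_mclp {K J : ℕ}
    (A : Matrix (Fin K) (Fin J) ℝ) (b β lam : Fin K → ℝ) (c γ μ : Fin J → ℝ) (T : ℝ)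
    (hT : 0 < T)
    (hβ : ∀ k, 0 < β k) (hlam : ∀ k, lam k < 0) (hβl : ∀ k, 0 < β k + T * b k + lam k)
    (hγ : ∀ j, γ j < 0) (hμ : ∀ j, 0 < μ j) (hγm : ∀ j, γ j + T * c j + μ j < 0) :
    PrimalFeasible A b β lam T (fun _ : ℝ => (0 : Fin J → ℝ)) ∧
    (∀ ν : Fin J → Measure ℝ, LSFamily T (fun _ : ℝ => (0 : Fin J → ℝ)) ν →
      zPrimal c γ μ T (fun _ : ℝ => (0 : Fin J → ℝ)) ν = 0) ∧
    (∀ (U : ℝ → Fin J → ℝ) (ν : Fin J → Measure ℝ),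
      PrimalFeasible A b β lam T U → LSFamily T U ν →
      zPrimal c γ μ T U ν ≤ 0) ∧
    (∀ (U : ℝ → Fin J → ℝ) (ν : Fin J → Measure ℝ),
      PrimalFeasible A b β lam T U → LSFamily T U ν →
      zPrimal c γ μ T U ν = 0 → ∀ t ∈ Set.Icc (0:ℝ) T, ∀ j, U t j = 0) := by
  -- the key per-coordinate analysis
  have key : ∀ (U : ℝ → Fin J → ℝ) (ν : Fin J → Measure ℝ),
      PrimalFeasible A b β lam T U → LSFamily T U ν → ∀ j : Fin J,
      (μ j * U 0 j + ∫ t in Set.Icc (0:ℝ) T, (γ j + (T - t) * c j) ∂(ν j)) ≤ 0 ∧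
      ((μ j * U 0 j + ∫ t in Set.Icc (0:ℝ) T, (γ j + (T - t) * c j) ∂(ν j)) = 0 →
        U 0 j = 0 ∧ ν j (Set.Ioc 0 T) = 0) := by
    intro U ν hU hν j
    obtain ⟨hmono, _, hU0, _, _⟩ := hU
    obtain ⟨hcompl, hIcc⟩ := hν j
    have h0T : (0:ℝ) ∈ Set.Icc (0:ℝ) T := ⟨le_refl 0, hT.le⟩
    have hT' : T ∈ Set.Icc (0:ℝ) T := ⟨hT.le, le_refl T⟩
    have hU0j : 0 ≤ U 0 j := hU0 j
    have hνIcc : ν j (Set.Icc 0 T) = ENNReal.ofReal (U T j) := hIcc T hT'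
    have hfin : ν j (Set.Icc 0 T) < ⊤ := by rw [hνIcc]; exact ENNReal.ofReal_lt_top
    have hν0 : ν j {(0:ℝ)} = ENNReal.ofReal (U 0 j) := by
      have := hIcc 0 h0T
      rwa [Set.Icc_self] at this
    set g : ℝ → ℝ := fun t => γ j + (T - t) * c j with hg
    have hgc : Continuous g := by fun_prop
    -- integrability
    have hint : IntegrableOn g (Set.Icc 0 T) (ν j) := by
      have hC : IntegrableOn (fun _ : ℝ => |γ j| + T * |c j|) (Set.Icc 0 T) (ν j) :=
        integrableOn_const hfin.ne
      refine hC.mono' hgc.aestronglyMeasurable.restrict ?_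
      filter_upwards [ae_restrict_mem measurableSet_Icc] with t ht
      rw [Real.norm_eq_abs]
      have h1 : |g t| ≤ |γ j| + |T - t| * |c j| := by
        calc |g t| ≤ |γ j| + |(T - t) * c j| := abs_add_le _ _
        _ = |γ j| + |T - t| * |c j| := by rw [abs_mul]
      have h2 : |T - t| ≤ T := by
        rw [abs_of_nonneg (by linarith [ht.2])]; linarith [ht.1]
      calc |g t| ≤ |γ j| + |T - t| * |c j| := h1
        _ ≤ |γ j| + T * |c j| := by nlinarith [abs_nonneg (c j)]
    have hsplit : Set.Icc (0:ℝ) T = {(0:ℝ)} ∪ Set.Ioc 0 T := by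
      rw [← Set.Icc_self (0:ℝ), Set.Icc_union_Ioc_eq_Icc (le_refl 0) hT.le]
    have hint0 : IntegrableOn g {(0:ℝ)} (ν j) :=
      hint.mono_set (by rw [hsplit]; exact Set.subset_union_left)
    have hintI : IntegrableOn g (Set.Ioc 0 T) (ν j) :=
      hint.mono_set (by rw [hsplit]; exact Set.subset_union_right)
    have hdisj : Disjoint {(0:ℝ)} (Set.Ioc 0 T) := by
      simp [Set.disjoint_left]
    have hIeq : ∫ t in Set.Icc (0:ℝ) T, g t ∂(ν j)
        = (γ j + T * c j) * U 0 j + ∫ t in Set.Ioc (0:ℝ) T, g t ∂(ν j) := by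
      rw [hsplit, setIntegral_union hdisj measurableSet_Ioc hint0 hintI]
      congr 1
      rw [integral_singleton, measureReal_def, hν0, ENNReal.toReal_ofReal hU0j]
      simp [hg, mul_comm]
    set M : ℝ := max (γ j) (γ j + T * c j) with hM
    have hMneg : M < 0 := max_lt (hγ j) (by nlinarith [hμ j, hγm j])
    have hgle : ∀ t ∈ Set.Ioc (0:ℝ) T, g t ≤ M := by
      intro t ht
      rcases le_total (c j) 0 with h | h
      · have : (T - t) * c j ≤ 0 :=
          mul_nonpos_of_nonneg_of_nonpos (by linarith [ht.2]) h
        exact le_trans (by simp [hg]; linarith) (le_max_left _ _)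
      · have : (T - t) * c j ≤ T * c j :=
          mul_le_mul_of_nonneg_right (by linarith [ht.1]) h
        exact le_trans (by simp [hg]; linarith) (le_max_right _ _)
    have hνIoc_fin : ν j (Set.Ioc 0 T) ≠ ⊤ :=
      (lt_of_le_of_lt (measure_mono Set.Ioc_subset_Icc_self) hfin).ne
    have hIoc_le : ∫ t in Set.Ioc (0:ℝ) T, g t ∂(ν j)
        ≤ M * (ν j (Set.Ioc 0 T)).toReal := by
      have := setIntegral_mono_on hintI
        (integrableOn_const (lt_of_le_of_lt
          (measure_mono Set.Ioc_subset_Icc_self) hfin).ne)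
        measurableSet_Ioc hgle
      rwa [setIntegral_const, smul_eq_mul, mul_comm, measureReal_def] at this
    have hIoc_nonpos : ∫ t in Set.Ioc (0:ℝ) T, g t ∂(ν j) ≤ 0 := by
      refine le_trans hIoc_le ?_
      have := ENNReal.toReal_nonneg (a := ν j (Set.Ioc 0 T))
      nlinarith
    have hterm : μ j * U 0 j + ∫ t in Set.Icc (0:ℝ) T, g t ∂(ν j)
        = (γ j + T * c j + μ j) * U 0 j + ∫ t in Set.Ioc (0:ℝ) T, g t ∂(ν j) := by
      rw [hIeq]; ring
    have hcoef : (γ j + T * c j + μ j) * U 0 j ≤ 0 :=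
      mul_nonpos_of_nonpos_of_nonneg (hγm j).le hU0j
    constructor
    · rw [hterm]; linarith
    · intro hz
      rw [hterm] at hz
      have h1 : (γ j + T * c j + μ j) * U 0 j = 0 := by linarith
      have h2 : ∫ t in Set.Ioc (0:ℝ) T, g t ∂(ν j) = 0 := by linarith
      have hU0z : U 0 j = 0 := by
        rcases mul_eq_zero.1 h1 with h | h
        · exact absurd h (hγm j).ne
        · exact h
      refine ⟨hU0z, ?_⟩
      have hx : (ν j (Set.Ioc 0 T)).toReal = 0 := by
        by_contra hne
        have hpos : 0 < (ν j (Set.Ioc 0 T)).toReal :=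
          lt_of_le_of_ne ENNReal.toReal_nonneg (Ne.symm hne)
        nlinarith [hIoc_le, h2, hMneg, hpos]
      exact (ENNReal.toReal_eq_zero_iff _).1 hx |>.resolve_right hνIoc_fin
  refine ⟨?_, ?_, ?_, ?_⟩
  · -- feasibility of 0
    refine ⟨fun j => monotoneOn_const, fun j t _ => tendsto_const_nhds,
      fun j => le_refl 0, ?_, ?_⟩
    · intro t ht k
      simp only [Matrix.mulVec_zero, Pi.zero_apply]
      have h1 := hβ k; have h2 := hβl k; have h3 := hlam k
      have := mul_nonneg ht.1 (hβl k).le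
      have := mul_nonneg ht.1 (neg_nonneg.2 (hlam k).le)
      have := mul_nonneg (sub_nonneg.2 ht.2.le) (hβ k).le
      have : T * (β k + t * b k) ≥ 0 := by nlinarith
      nlinarith
    · intro k
      simp only [Matrix.mulVec_zero, Pi.zero_apply]
      exact (hβl k).le
  · -- objective of 0 is 0
    intro ν hν
    have hz : ∀ j : Fin J, ν j (Set.Icc (0:ℝ) T) = 0 := by
      intro j
      have := (hν j).2 T ⟨hT.le, le_refl T⟩
      simpa using this
    unfold zPrimal
    simp only [Pi.zero_apply, mul_zero, Finset.sum_const_zero, zero_add]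
    refine Finset.sum_eq_zero fun j _ => ?_
    rw [Measure.restrict_eq_zero.2 (hz j), integral_zero_measure]
  · -- optimality
    intro U ν hU hν
    unfold zPrimal
    rw [← Finset.sum_add_distrib]
    exact Finset.sum_nonpos fun j _ => (key U ν hU hν j).1
  · -- uniqueness
    intro U ν hU hν hz t ht j
    have hsum : ∑ j : Fin J, (μ j * U 0 j +
        ∫ t in Set.Icc (0:ℝ) T, (γ j + (T - t) * c j) ∂(ν j)) = 0 := by
      unfold zPrimal at hz
      rw [← Finset.sum_add_distrib] at hz
      exact hz
    have heach : ∀ j : Fin J, (μ j * U 0 j +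
        ∫ t in Set.Icc (0:ℝ) T, (γ j + (T - t) * c j) ∂(ν j)) = 0 := by
      intro j
      have := (Finset.sum_eq_zero_iff_of_nonpos
        (fun i _ => (key U ν hU hν i).1)).1 hsum
      exact this j (Finset.mem_univ j)
    obtain ⟨hU0z, hνz⟩ := (key U ν hU hν j).2 (heach j)
    obtain ⟨hmono, _, hU0, _, _⟩ := hU
    obtain ⟨_, hIcc⟩ := hν j
    have hν0 : ν j {(0:ℝ)} = 0 := by
      have := hIcc 0 ⟨le_refl 0, hT.le⟩
      rw [Set.Icc_self, hU0z] at this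
      simpa using this
    have hνt : ν j (Set.Icc 0 t) = 0 := by
      have hsub : Set.Icc (0:ℝ) t ⊆ {(0:ℝ)} ∪ Set.Ioc 0 T := by
        intro x hx
        rcases eq_or_lt_of_le hx.1 with h | h
        · exact Or.inl (by simp [← h])
        · exact Or.inr ⟨h, hx.2.trans ht.2⟩
      refine le_antisymm ?_ (by simp)
      calc ν j (Set.Icc 0 t) ≤ ν j ({(0:ℝ)} ∪ Set.Ioc 0 T) := measure_mono hsub
        _ ≤ ν j {(0:ℝ)} + ν j (Set.Ioc 0 T) := measure_union_le _ _
        _ = 0 := by rw [hν0, hνz, add_zero]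
    have := hIcc t ht
    rw [hνt] at this
    have hle : U t j ≤ 0 := by
      have := (ENNReal.ofReal_eq_zero).1 this.symm
      linarith
    have hge : 0 ≤ U t j := le_trans (hU0 j) (hmono j ⟨le_refl 0, hT.le⟩ ht ht.1)
    linarith
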